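/- Cauchy–Schwarz bound for weighted Adam updates: with 0 ≤ β₁ ≤ β₂ < 1, m_t = β₁^t m_0 + (1−β₁)Σ_{i=0}^{t−1} β₁^i g_{t−i}, v_t ≥ β₂^t v_0 + (1−β₂)Σ_{i=0}^{t−1} β₂^i g_{t−i}² with v_t > 0 and m_0² ≤ v_0, and nonnegative coefficients η_t, one has |Σ_{t=1}^T η_t m_t/√v_t| ≤ (Σ_{t=1}^T η_t (β₁^t v_0/v_t + Σ_{i=0}^{t−1}(1−β₁)β₁^i g_{t−i}²/v_t))^{1/2} (Σ_{t=1}^T η_t)^{1/2}. -/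

import Mathlib

open Finset

/-- Weighted Cauchy–Schwarz / Jensen: `(∑ w a)² ≤ (∑ w)(∑ w a²)` for nonneg weights. -/
lemma weighted_cs (s : Finset ℕ) (w a : ℕ → ℝ) (hw : ∀ i ∈ s, 0 ≤ w i) :
    (∑ i ∈ s, w i * a i) ^ 2 ≤ (∑ i ∈ s, w i) * ∑ i ∈ s, w i * a i ^ 2 := by
  have h := Finset.sum_mul_sq_le_sq_mul_sq s (fun i => Real.sqrt (w i))
      (fun i => Real.sqrt (w i) * a i)
  have e1 : ∀ i ∈ s, Real.sqrt (w i) * (Real.sqrt (w i) * a i) = w i * a i := by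
    intro i hi
    rw [← mul_assoc, Real.mul_self_sqrt (hw i hi)]
  have e2 : ∀ i ∈ s, Real.sqrt (w i) ^ 2 = w i := fun i hi => Real.sq_sqrt (hw i hi)
  have e3 : ∀ i ∈ s, (Real.sqrt (w i) * a i) ^ 2 = w i * a i ^ 2 := by
    intro i hi
    rw [mul_pow, Real.sq_sqrt (hw i hi)]
  rw [Finset.sum_congr rfl e1, Finset.sum_congr rfl e2, Finset.sum_congr rfl e3] at h
  exact h

/-- Cauchy–Schwarz bound for weighted Adam updates. -/
theorem adam_weighted_cauchy_schwarz (β₁ β₂ : ℝ) (hβ₁ : 0 ≤ β₁) (hβ12 : β₁ ≤ β₂) (hβ₂ : β₂ < 1)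
    (g m v : ℕ → ℝ) (η : ℕ → ℝ) (T : ℕ)
    (hm0v0 : m 0 ^ 2 ≤ v 0)
    (hm : ∀ t, 1 ≤ t →
      m t = β₁ ^ t * m 0 + (1 - β₁) * ∑ i ∈ Finset.range t, β₁ ^ i * g (t - i))
    (hvpos : ∀ t, 1 ≤ t → 0 < v t)
    (hv : ∀ t, 1 ≤ t →
      β₂ ^ t * v 0 + (1 - β₂) * ∑ i ∈ Finset.range t, β₂ ^ i * g (t - i) ^ 2 ≤ v t)
    (hη : ∀ t, 0 ≤ η t) :
    |∑ t ∈ Finset.Icc 1 T, η t * (m t / Real.sqrt (v t))| ≤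
      Real.sqrt (∑ t ∈ Finset.Icc 1 T, η t *
          (β₁ ^ t * v 0 / v t +
            ∑ i ∈ Finset.range t, (1 - β₁) * β₁ ^ i * g (t - i) ^ 2 / v t)) *
        Real.sqrt (∑ t ∈ Finset.Icc 1 T, η t) := by
  have hβ₁lt : β₁ < 1 := lt_of_le_of_lt hβ12 hβ₂
  -- pointwise key bound
  have key : ∀ t ∈ Finset.Icc 1 T, (m t / Real.sqrt (v t)) ^ 2 ≤
      β₁ ^ t * v 0 / v t +
        ∑ i ∈ Finset.range t, (1 - β₁) * β₁ ^ i * g (t - i) ^ 2 / v t := by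
    intro t ht
    have ht1 : 1 ≤ t := (Finset.mem_Icc.mp ht).1
    have hvt := hvpos t ht1
    have hsq : Real.sqrt (v t) ^ 2 = v t := Real.sq_sqrt hvt.le
    -- m t ^ 2 ≤ β₁^t v0 + ∑ (1-β₁)β₁^i g²
    have hmt : m t ^ 2 ≤ β₁ ^ t * v 0 +
        ∑ i ∈ Finset.range t, (1 - β₁) * β₁ ^ i * g (t - i) ^ 2 := by
      set w : ℕ → ℝ := fun i => if i < t then (1 - β₁) * β₁ ^ i else β₁ ^ t with hw
      set a : ℕ → ℝ := fun i => if i < t then g (t - i) else m 0 with ha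
      have hwnn : ∀ i ∈ Finset.range (t + 1), 0 ≤ w i := by
        intro i _
        simp only [hw]
        split
        · exact mul_nonneg (by linarith) (pow_nonneg hβ₁ _)
        · exact pow_nonneg hβ₁ _
      have hcs := weighted_cs (Finset.range (t + 1)) w a hwnn
      have hsum1 : (∑ i ∈ Finset.range (t + 1), w i) = 1 := by
        rw [Finset.sum_range_succ]
        have : ∀ i ∈ Finset.range t, w i = (1 - β₁) * β₁ ^ i := by
          intro i hi
          simp [hw, Finset.mem_range.mp hi]
        rw [Finset.sum_congr rfl this, ← Finset.mul_sum]
        have hg : (1 - β₁) * ∑ i ∈ Finset.range t, β₁ ^ i = 1 - β₁ ^ t := by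
          have h := geom_sum_mul β₁ t
          linear_combination -h
        rw [hg]
        simp [hw]
      have hsum2 : (∑ i ∈ Finset.range (t + 1), w i * a i) = m t := by
        rw [Finset.sum_range_succ, hm t ht1]
        have : ∀ i ∈ Finset.range t, w i * a i = (1 - β₁) * (β₁ ^ i * g (t - i)) := by
          intro i hi
          simp [hw, ha, Finset.mem_range.mp hi]
          ring
        rw [Finset.sum_congr rfl this, ← Finset.mul_sum]
        simp [hw, ha]
        ring
      have hsum3 : (∑ i ∈ Finset.range (t + 1), w i * a i ^ 2) =
          β₁ ^ t * m 0 ^ 2 + ∑ i ∈ Finset.range t, (1 - β₁) * β₁ ^ i * g (t - i) ^ 2 := by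
        rw [Finset.sum_range_succ]
        have : ∀ i ∈ Finset.range t, w i * a i ^ 2 = (1 - β₁) * β₁ ^ i * g (t - i) ^ 2 := by
          intro i hi
          simp [hw, ha, Finset.mem_range.mp hi]
        rw [Finset.sum_congr rfl this]
        simp [hw, ha]
        ring
      rw [hsum1, hsum2, hsum3, one_mul] at hcs
      have : β₁ ^ t * m 0 ^ 2 ≤ β₁ ^ t * v 0 :=
        mul_le_mul_of_nonneg_left hm0v0 (pow_nonneg hβ₁ _)
      linarith
    have hdivsum : β₁ ^ t * v 0 / v t +
        ∑ i ∈ Finset.range t, (1 - β₁) * β₁ ^ i * g (t - i) ^ 2 / v t =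
        (β₁ ^ t * v 0 + ∑ i ∈ Finset.range t, (1 - β₁) * β₁ ^ i * g (t - i) ^ 2) / v t := by
      rw [add_div, Finset.sum_div]
    rw [div_pow, hsq, hdivsum]
    exact div_le_div_of_nonneg_right hmt hvt.le |>.trans_eq rfl
  -- Cauchy–Schwarz over Icc 1 T
  have hcs := weighted_cs (Finset.Icc 1 T) η (fun t => m t / Real.sqrt (v t))
      (fun t _ => hη t)
  have hstep : (∑ t ∈ Finset.Icc 1 T, η t * (m t / Real.sqrt (v t)) ^ 2) ≤
      ∑ t ∈ Finset.Icc 1 T, η t *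
        (β₁ ^ t * v 0 / v t +
          ∑ i ∈ Finset.range t, (1 - β₁) * β₁ ^ i * g (t - i) ^ 2 / v t) :=
    Finset.sum_le_sum fun t ht => mul_le_mul_of_nonneg_left (key t ht) (hη t)
  have hηsum : 0 ≤ ∑ t ∈ Finset.Icc 1 T, η t := Finset.sum_nonneg fun t _ => hη t
  have hsq : (∑ t ∈ Finset.Icc 1 T, η t * (m t / Real.sqrt (v t))) ^ 2 ≤
      (∑ t ∈ Finset.Icc 1 T, η t *
        (β₁ ^ t * v 0 / v t +
          ∑ i ∈ Finset.range t, (1 - β₁) * β₁ ^ i * g (t - i) ^ 2 / v t)) *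
      ∑ t ∈ Finset.Icc 1 T, η t := by
    calc (∑ t ∈ Finset.Icc 1 T, η t * (m t / Real.sqrt (v t))) ^ 2
        ≤ (∑ t ∈ Finset.Icc 1 T, η t) *
            ∑ t ∈ Finset.Icc 1 T, η t * (m t / Real.sqrt (v t)) ^ 2 := hcs
      _ ≤ (∑ t ∈ Finset.Icc 1 T, η t) * ∑ t ∈ Finset.Icc 1 T, η t *
            (β₁ ^ t * v 0 / v t +
              ∑ i ∈ Finset.range t, (1 - β₁) * β₁ ^ i * g (t - i) ^ 2 / v t) :=
          mul_le_mul_of_nonneg_left hstep hηsum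
      _ = _ := mul_comm _ _
  have habs : |∑ t ∈ Finset.Icc 1 T, η t * (m t / Real.sqrt (v t))| =
      Real.sqrt ((∑ t ∈ Finset.Icc 1 T, η t * (m t / Real.sqrt (v t))) ^ 2) :=
    (Real.sqrt_sq_eq_abs _).symm
  rw [habs, ← Real.sqrt_mul ?hnn]
  · exact Real.sqrt_le_sqrt hsq
  case hnn =>
    have h0 : 0 ≤ ∑ t ∈ Finset.Icc 1 T, η t * (m t / Real.sqrt (v t)) ^ 2 :=
      Finset.sum_nonneg fun t _ => mul_nonneg (hη t) (sq_nonneg _)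
    linarith
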